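/- Let 𝒩 and 𝒬 be nontrivial varieties of groups and 𝒱 = 𝒩𝒬. Let G ∈ 𝒱, H a subgroup of G, N = 𝒬(G) the verbal subgroup of G associated to 𝒬, and D = dom_N^𝒩(N ∩ H), regarded as a subgroup of G. If N_G(D)·N = G (where N_G(D) is the normalizer of D in G), then dom_G^{𝒩𝒬}(H) = HD. -/

import Mathlib

/-- A bundled group: a type in universe `u` together with a group structure. -/
structure GroupT : Type (u + 1) where
  carrier : Type u
  [str : Group carrier]

attribute [instance] GroupT.str

/-- A variety of groups: a class of groups closed under isomorphism, subgroups,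
homomorphic images, and arbitrary direct products indexed by types in the universe. -/
structure GroupVariety : Type (u + 1) where
  Mem : GroupT.{u} → Prop
  iso_closed : ∀ {G H : GroupT.{u}}, G.carrier ≃* H.carrier → Mem G → Mem H
  subgroup_closed : ∀ (G : GroupT.{u}) (H : Subgroup G.carrier), Mem G → Mem ⟨H⟩
  quotient_closed : ∀ (G H : GroupT.{u}) (f : G.carrier →* H.carrier),
      Function.Surjective f → Mem G → Mem H
  pi_closed : ∀ (ι : Type u) (f : ι → GroupT.{u}),
      (∀ i, Mem (f i)) → Mem ⟨∀ i, (f i).carrier⟩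

/-- A variety is nontrivial if it contains some nontrivial group and
does not contain all groups. -/
def GroupVariety.IsNontrivial (V : GroupVariety.{u}) : Prop :=
  (∃ G : GroupT.{u}, V.Mem G ∧ Nontrivial G.carrier) ∧ ∃ G : GroupT.{u}, ¬ V.Mem G

/-- The dominion of a subgroup `H` of `G` relative to a class `C` of groups:
all elements of `G` on which any two homomorphisms into a `C`-group agreeing on `H`
must agree. -/
def dominion (C : GroupT.{u} → Prop) (G : Type u) [Group G] (H : Subgroup G) : Set G :=
  {a | ∀ K : GroupT.{u}, C K → ∀ f g : G →* K.carrier, (∀ h ∈ H, f h = g h) → f a = g a}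

/-- The product variety `𝒩𝒬`: the class of groups having a normal subgroup in `𝒩`
with quotient in `𝒬`. -/
def ProductVariety (N Q : GroupVariety.{u}) (G : GroupT.{u}) : Prop :=
  ∃ (M : Subgroup G.carrier) (h : M.Normal),
    N.Mem ⟨M⟩ ∧ (letI := h; Q.Mem ⟨G.carrier ⧸ M⟩)

/-- The verbal subgroup `𝒬(G)`: the intersection of all normal subgroups of `G`
whose quotient lies in `𝒬`. -/
def verbalSubgroup (Q : GroupVariety.{u}) (G : Type u) [Group G] : Subgroup G :=
  ⨅ M ∈ {M : Subgroup G | ∃ h : M.Normal, (letI := h; Q.Mem ⟨G ⧸ M⟩)}, M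

open scoped Pointwise

section Aux

variable (Q K : Type u) [Group Q] [Group K]

/-- Right-translation action of `Q` on `Q → K`. -/
def transAction : Q →* MulAut (Q → K) where
  toFun r :=
    { toFun := fun c q => c (q * r)
      invFun := fun c q => c (q * r⁻¹)
      left_inv := fun c => funext fun q => by simp [mul_assoc]
      right_inv := fun c => funext fun q => by simp [mul_assoc]
      map_mul' := fun c d => rfl }
  map_one' := by ext c q; simp
  map_mul' r s := by ext c q; simp [mul_assoc, MulAut.mul_apply]

@[simp] lemma transAction_apply (r : Q) (c : Q → K) (q : Q) :
    transAction Q K r c q = c (q * r) := rfl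

end Aux

section KK

variable {G : Type u} [Group G] (N : Subgroup G) [N.Normal]
variable {K : Type u} [Group K]

/-- The Kaloujnine–Krasner element `σ q * x * (σ (q * x̄))⁻¹ ∈ N`. -/
def kkElt (σ : G ⧸ N → G) (hσ : ∀ q, (QuotientGroup.mk (σ q) : G ⧸ N) = q)
    (q : G ⧸ N) (x : G) : ↥N :=
  ⟨σ q * x * (σ (q * QuotientGroup.mk x))⁻¹, by
    rw [← QuotientGroup.eq_one_iff (N := N)]
    simp only [QuotientGroup.mk_mul, QuotientGroup.mk_inv, hσ]
    group⟩

lemma kkElt_coe (σ : G ⧸ N → G) (hσ : ∀ q, (QuotientGroup.mk (σ q) : G ⧸ N) = q)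
    (q : G ⧸ N) (x : G) :
    (kkElt N σ hσ q x : G) = σ q * x * (σ (q * QuotientGroup.mk x))⁻¹ := rfl

lemma kkElt_mul (σ : G ⧸ N → G) (hσ : ∀ q, (QuotientGroup.mk (σ q) : G ⧸ N) = q)
    (q : G ⧸ N) (x y : G) :
    kkElt N σ hσ q (x * y)
      = kkElt N σ hσ q x * kkElt N σ hσ (q * QuotientGroup.mk x) y := by
  apply Subtype.ext
  simp only [Subgroup.coe_mul, kkElt_coe, QuotientGroup.mk_mul, ← mul_assoc]
  group

/-- The Kaloujnine–Krasner style homomorphism `G → (Q → K) ⋊ Q` induced by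
a homomorphism `f : N → K` and a transversal `σ`. -/
def kkHom (f : ↥N →* K) (σ : G ⧸ N → G)
    (hσ : ∀ q, (QuotientGroup.mk (σ q) : G ⧸ N) = q) :
    G →* (G ⧸ N → K) ⋊[transAction (G ⧸ N) K] (G ⧸ N) where
  toFun x := ⟨fun q => f (kkElt N σ hσ q x), QuotientGroup.mk x⟩
  map_one' := by
    refine SemidirectProduct.ext ?_ (by simp)
    funext q
    have h1 : kkElt N σ hσ q 1 = 1 := by
      apply Subtype.ext; simp [kkElt_coe]
    simp [h1]
  map_mul' x y := by
    refine SemidirectProduct.ext ?_ (by simp [SemidirectProduct.mul_right])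
    funext q
    simp only [SemidirectProduct.mul_left, Pi.mul_apply, transAction_apply,
      kkElt_mul N σ hσ q x y, map_mul]

@[simp] lemma kkHom_left (f : ↥N →* K) (σ : G ⧸ N → G)
    (hσ : ∀ q, (QuotientGroup.mk (σ q) : G ⧸ N) = q) (x : G) (q : G ⧸ N) :
    (kkHom N f σ hσ x).left q = f (kkElt N σ hσ q x) := rfl

/-- The principal-derivation homomorphism `x ↦ (t * (x̄ • t)⁻¹, x̄)`. -/
def cocycleHom (t : G ⧸ N → K) :
    G →* (G ⧸ N → K) ⋊[transAction (G ⧸ N) K] (G ⧸ N) where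
  toFun x := ⟨t * (transAction (G ⧸ N) K (QuotientGroup.mk x) t)⁻¹, QuotientGroup.mk x⟩
  map_one' := by
    refine SemidirectProduct.ext ?_ (by simp)
    funext q; simp
  map_mul' x y := by
    refine SemidirectProduct.ext ?_ (by simp [SemidirectProduct.mul_right])
    funext q
    simp only [SemidirectProduct.mul_left, Pi.mul_apply, Pi.inv_apply, transAction_apply,
      QuotientGroup.mk_mul]
    simp [mul_assoc]

@[simp] lemma cocycleHom_left (t : G ⧸ N → K) (x : G) (q : G ⧸ N) :
    (cocycleHom N t x).left q = t q * (t (q * QuotientGroup.mk x))⁻¹ := rfl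

@[simp] lemma cocycleHom_right (t : G ⧸ N → K) (x : G) :
    (cocycleHom N t x).right = QuotientGroup.mk x := rfl

end KK

section Variety

variable (𝒩 𝒬 : GroupVariety.{u})

lemma wr_productVariety (Q K : Type u) [Group Q] [Group K]
    (hK : 𝒩.Mem ⟨K⟩) (hQ : 𝒬.Mem ⟨Q⟩) :
    ProductVariety 𝒩 𝒬 ⟨(Q → K) ⋊[transAction Q K] Q⟩ := by
  refine ⟨MonoidHom.ker (SemidirectProduct.rightHom), inferInstance, ?_, ?_⟩
  · have h1 : 𝒩.Mem ⟨(Q → K)⟩ := 𝒩.pi_closed Q (fun _ => ⟨K⟩) (fun _ => hK)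
    have e : (Q → K) ≃* MonoidHom.ker (SemidirectProduct.rightHom :
        (Q → K) ⋊[transAction Q K] Q →* Q) :=
      (MonoidHom.ofInjective SemidirectProduct.inl_injective).trans
        (MulEquiv.subgroupCongr SemidirectProduct.range_inl_eq_ker_rightHom)
    exact 𝒩.iso_closed e h1
  · refine 𝒬.iso_closed (G := ⟨Q⟩) ?_ hQ
    exact (QuotientGroup.quotientKerEquivOfSurjective
      (SemidirectProduct.rightHom) SemidirectProduct.rightHom_surjective).symm

variable (G : Type u) [Group G]

lemma verbal_normal : (verbalSubgroup 𝒬 G).Normal := by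
  constructor
  intro n hn g
  simp only [verbalSubgroup, Subgroup.mem_iInf] at hn ⊢
  intro M hM
  exact hM.choose.conj_mem n (hn M hM) g

lemma verbal_le (M : Subgroup G) (h : M.Normal)
    (hM : letI := h; 𝒬.Mem ⟨G ⧸ M⟩) : verbalSubgroup 𝒬 G ≤ M :=
  biInf_le _ ⟨h, hM⟩

lemma verbal_quotient_mem :
    letI := verbal_normal 𝒬 G; 𝒬.Mem ⟨G ⧸ verbalSubgroup 𝒬 G⟩ := by
  letI := verbal_normal 𝒬 G
  classical
  let S := {M : Subgroup G | ∃ h : M.Normal, letI := h; 𝒬.Mem ⟨G ⧸ M⟩}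
  letI : ∀ M : {M : Subgroup G // M ∈ S}, (M.1).Normal := fun M => M.2.choose
  let Fam : {M : Subgroup G // M ∈ S} → GroupT.{u} := fun M => ⟨G ⧸ M.1⟩
  have hFam : ∀ M, 𝒬.Mem (Fam M) := fun M => M.2.choose_spec
  let Φ : G →* ∀ M, (Fam M).carrier :=
    { toFun := fun x M => (QuotientGroup.mk x : G ⧸ M.1)
      map_one' := rfl
      map_mul' := fun x y => rfl }
  have hker : Φ.ker = verbalSubgroup 𝒬 G := by
    ext x
    simp only [MonoidHom.mem_ker, verbalSubgroup, Subgroup.mem_iInf, funext_iff]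
    constructor
    · intro hx M hM
      exact (QuotientGroup.eq_one_iff (N := (⟨M, hM⟩ : {M : Subgroup G // M ∈ S}).1) x).1
        (hx ⟨M, hM⟩)
    · intro hx M
      exact (QuotientGroup.eq_one_iff x).2 (hx M.1 M.2)
  have e0 : G ⧸ verbalSubgroup 𝒬 G ≃* G ⧸ Φ.ker :=
    QuotientGroup.quotientMulEquivOfEq hker.symm
  have e1 : G ⧸ Φ.ker ≃* Φ.range := QuotientGroup.quotientKerEquivRange Φ
  have h2 : 𝒬.Mem ⟨∀ M, (Fam M).carrier⟩ := 𝒬.pi_closed _ Fam hFam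
  have h3 : 𝒬.Mem ⟨Φ.range⟩ := 𝒬.subgroup_closed _ Φ.range h2
  exact 𝒬.iso_closed (e0.trans e1).symm h3

end Variety

theorem stmt5 (𝒩 𝒬 : GroupVariety.{u}) (h𝒩 : 𝒩.IsNontrivial) (h𝒬 : 𝒬.IsNontrivial)
    (G : Type u) [Group G] (hG : ProductVariety 𝒩 𝒬 ⟨G⟩) (H : Subgroup G)
    (N : Subgroup G) (hN : N = verbalSubgroup 𝒬 G)
    (D : Set G) (hD : D = Subtype.val '' dominion 𝒩.Mem (↥N) (H.subgroupOf N))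
    (hnorm : (Subgroup.setNormalizer D : Set G) * (N : Set G) = Set.univ) :
    dominion (ProductVariety 𝒩 𝒬) G H = (H : Set G) * D := by
  classical
  subst hN
  set N := verbalSubgroup 𝒬 G with hN
  letI hNnorm : N.Normal := verbal_normal 𝒬 G
  have hQmem : 𝒬.Mem ⟨G ⧸ N⟩ := verbal_quotient_mem 𝒬 G
  set Hbar : Subgroup (G ⧸ N) := H.map (QuotientGroup.mk' N) with hHbar
  -- elements of H ∩ N lie in D
  have hHND : ∀ w : G, w ∈ H → w ∈ N → w ∈ D := by
    intro w hwH hwN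
    rw [hD]
    exact ⟨⟨w, hwN⟩, fun K hK f g hfg => hfg _ (Subgroup.mem_subgroupOf.2 hwH), rfl⟩
  -- Step 1 : the dominion is contained in `H * N`
  have step1 : ∀ a : G, a ∈ dominion (ProductVariety 𝒩 𝒬) G H →
      (QuotientGroup.mk a : G ⧸ N) ∈ Hbar := by
    intro a ha
    by_contra habar
    obtain ⟨A, hA, hAnt⟩ := h𝒩.1
    obtain ⟨a₀, ha₀⟩ := exists_ne (1 : A.carrier)
    set t : G ⧸ N → A.carrier := fun q => if q ∈ Hbar then a₀ else 1 with ht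
    have hW := wr_productVariety 𝒩 𝒬 (G ⧸ N) A.carrier hA hQmem
    have hagree : ∀ h ∈ H, cocycleHom N t h =
        (SemidirectProduct.inr.comp (QuotientGroup.mk' N)) h := by
      intro h hh
      have hhbar : (QuotientGroup.mk h : G ⧸ N) ∈ Hbar := ⟨h, hh, rfl⟩
      refine SemidirectProduct.ext ?_ rfl
      funext q
      have hiff : t (q * QuotientGroup.mk h) = t q := by
        simp only [ht]
        by_cases hq : q ∈ Hbar
        · rw [if_pos (mul_mem hq hhbar), if_pos hq]
        · rw [if_neg, if_neg hq]
          intro hmem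
          exact hq (by simpa [mul_assoc] using mul_mem hmem (inv_mem hhbar))
      show t q * (t (q * QuotientGroup.mk h))⁻¹ = _
      rw [hiff]
      simp
    have hvv := ha ⟨(G ⧸ N → A.carrier) ⋊[transAction (G ⧸ N) A.carrier] (G ⧸ N)⟩ hW
      (cocycleHom N t) (SemidirectProduct.inr.comp (QuotientGroup.mk' N)) hagree
    have hleft := congrFun (congrArg SemidirectProduct.left hvv) (1 : G ⧸ N)
    have h1 : t (1 : G ⧸ N) = a₀ := if_pos (one_mem _)
    have h2 : t ((1 : G ⧸ N) * QuotientGroup.mk a) = 1 := by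
      rw [one_mul]; exact if_neg habar
    apply ha₀
    have : t (1 : G ⧸ N) * (t ((1 : G ⧸ N) * QuotientGroup.mk a))⁻¹ = 1 := by
      simpa using hleft
    rw [h1, h2] at this
    simpa using this
  -- construction of the transversal σ
  have hexR : ∀ q : G ⧸ N, ∃ r : G, r ∈ Subgroup.setNormalizer D ∧
      (QuotientGroup.mk r : G ⧸ N) = q := by
    intro q
    have hq : (Quotient.out q : G) ∈ (Subgroup.setNormalizer D : Set G) * (N : Set G) := by
      rw [hnorm]; trivial
    obtain ⟨r, hr, m, hm, hrm⟩ := Set.mem_mul.1 hq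
    refine ⟨r, hr, ?_⟩
    have h1 : (QuotientGroup.mk (r * m) : G ⧸ N) = q := by
      rw [hrm]; exact QuotientGroup.out_eq' q
    have h2 : (QuotientGroup.mk m : G ⧸ N) = 1 := (QuotientGroup.eq_one_iff m).2 hm
    calc (QuotientGroup.mk r : G ⧸ N)
        = QuotientGroup.mk (r * m) * (QuotientGroup.mk m : G ⧸ N)⁻¹ := by
          rw [QuotientGroup.mk_mul]; group
      _ = q := by rw [h1, h2]; group
  choose rep0 hrep0R hrep0mk using hexR
  set O := (G ⧸ N) ⧸ Hbar with hO
  set repO : O → G := fun o =>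
    if o = (QuotientGroup.mk (1 : G ⧸ N) : O) then 1 else rep0 (Quotient.out o) with hrepO
  have hrepO_R : ∀ o, repO o ∈ Subgroup.setNormalizer D := by
    intro o
    by_cases h : o = (QuotientGroup.mk (1 : G ⧸ N) : O)
    · rw [hrepO]; simp only [if_pos h]; exact one_mem _
    · rw [hrepO]; simp only [if_neg h]; exact hrep0R _
  have hrepO_mk : ∀ o : O, (QuotientGroup.mk (QuotientGroup.mk (repO o) : G ⧸ N) : O) = o := by
    intro o
    by_cases h : o = (QuotientGroup.mk (1 : G ⧸ N) : O)
    · rw [hrepO]; simp only [if_pos h, h]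
      norm_num
    · rw [hrepO]; simp only [if_neg h, hrep0mk]
      exact QuotientGroup.out_eq' o
  have hrepO_1 : repO (QuotientGroup.mk (1 : G ⧸ N)) = 1 := by
    rw [hrepO]; simp
  have hexτ : ∀ q : G ⧸ N, q ∈ Hbar → ∃ h : G, h ∈ H ∧ (QuotientGroup.mk h : G ⧸ N) = q := by
    intro q hq
    obtain ⟨h, hh, rfl⟩ := hq
    exact ⟨h, hh, rfl⟩
  set τ : G ⧸ N → G := fun q =>
    if q = 1 then 1 else if h : q ∈ Hbar then (hexτ q h).choose else 1 with hτ
  have hτH : ∀ q ∈ Hbar, τ q ∈ H := by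
    intro q hq
    rw [hτ]
    by_cases h1 : q = 1
    · simp only [if_pos h1]; exact one_mem H
    · simp only [if_neg h1, dif_pos hq]; exact (hexτ q hq).choose_spec.1
  have hτmk : ∀ q ∈ Hbar, (QuotientGroup.mk (τ q) : G ⧸ N) = q := by
    intro q hq
    rw [hτ]
    by_cases h1 : q = 1
    · simp only [if_pos h1, h1]; norm_num
    · simp only [if_neg h1, dif_pos hq]; exact (hexτ q hq).choose_spec.2
  have hτ1 : τ 1 = 1 := by rw [hτ]; simp
  set σ : G ⧸ N → G := fun q =>
    repO (QuotientGroup.mk q) *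
      τ ((QuotientGroup.mk (repO (QuotientGroup.mk q)) : G ⧸ N)⁻¹ * q) with hσ
  have hbmem : ∀ q : G ⧸ N,
      ((QuotientGroup.mk (repO (QuotientGroup.mk q)) : G ⧸ N))⁻¹ * q ∈ Hbar := by
    intro q
    exact QuotientGroup.eq.1 (hrepO_mk (QuotientGroup.mk q))
  have hσmk : ∀ q : G ⧸ N, (QuotientGroup.mk (σ q) : G ⧸ N) = q := by
    intro q
    rw [hσ]
    show (QuotientGroup.mk (repO (QuotientGroup.mk q) * τ _) : G ⧸ N) = q
    rw [QuotientGroup.mk_mul, hτmk _ (hbmem q)]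
    group
  have hσ1 : σ 1 = 1 := by
    rw [hσ]
    show repO (QuotientGroup.mk (1 : G ⧸ N)) * τ _ = 1
    rw [hrepO_1]
    have harg : ((QuotientGroup.mk (1 : G) : G ⧸ N))⁻¹ * (1 : G ⧸ N) = 1 := by
      norm_num
    rw [harg, hτ1, mul_one]
  have hσkey : ∀ (q : G ⧸ N) (h : G), h ∈ H →
      ∃ r, r ∈ Subgroup.setNormalizer D ∧ ∃ w, w ∈ H ∧ w ∈ N ∧
        σ q * h * (σ (q * QuotientGroup.mk h))⁻¹ = r * w * r⁻¹ := by
    intro q h hh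
    have hhbar : (QuotientGroup.mk h : G ⧸ N) ∈ Hbar := ⟨h, hh, rfl⟩
    have horb : (QuotientGroup.mk (q * QuotientGroup.mk h) : O) = QuotientGroup.mk q := by
      rw [QuotientGroup.eq]
      simpa [mul_assoc] using inv_mem hhbar
    have hb2 : ((QuotientGroup.mk (repO (QuotientGroup.mk q)) : G ⧸ N))⁻¹ *
        (q * QuotientGroup.mk h) ∈ Hbar := by
      have := hbmem (q * QuotientGroup.mk h)
      rwa [horb] at this
    refine ⟨repO (QuotientGroup.mk q), hrepO_R _,
      τ (((QuotientGroup.mk (repO (QuotientGroup.mk q)) : G ⧸ N))⁻¹ * q) * h *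
        (τ (((QuotientGroup.mk (repO (QuotientGroup.mk q)) : G ⧸ N))⁻¹ *
          (q * QuotientGroup.mk h)))⁻¹, ?_, ?_, ?_⟩
    · exact mul_mem (mul_mem (hτH _ (hbmem q)) hh) (inv_mem (hτH _ hb2))
    · rw [← QuotientGroup.eq_one_iff (N := N)]
      rw [QuotientGroup.mk_mul, QuotientGroup.mk_mul, QuotientGroup.mk_inv,
        hτmk _ (hbmem q), hτmk _ hb2]
      group
    · have e2 : σ (q * QuotientGroup.mk h) = repO (QuotientGroup.mk q) *
          τ (((QuotientGroup.mk (repO (QuotientGroup.mk q)) : G ⧸ N))⁻¹ *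
            (q * QuotientGroup.mk h)) := by
        rw [hσ]
        show repO (QuotientGroup.mk (q * QuotientGroup.mk h)) * τ _ = _
        rw [horb]
      rw [hσ] at e2 ⊢
      rw [e2]
      group
  -- Step 2 : elements of the dominion lying in N lie in the inner dominion
  have step2 : ∀ (n : G) (hn : n ∈ N), n ∈ dominion (ProductVariety 𝒩 𝒬) G H →
      (⟨n, hn⟩ : ↥N) ∈ dominion 𝒩.Mem (↥N) (H.subgroupOf N) := by
    intro n hn hdom K hK f g hfg
    have hfgD : ∀ e : ↥N, (e : G) ∈ D → f e = g e := by
      intro e he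
      rw [hD] at he
      obtain ⟨d, hd, hde⟩ := he
      have hed : e = d := Subtype.ext hde.symm
      rw [hed]
      exact hd K hK f g hfg
    have hagree : ∀ h ∈ H, kkHom N f σ hσmk h = kkHom N g σ hσmk h := by
      intro h hh
      refine SemidirectProduct.ext ?_ rfl
      funext q
      simp only [kkHom_left]
      obtain ⟨r, hr, w, hwH, hwN, heq⟩ := hσkey q h hh
      refine hfgD _ ?_
      rw [kkElt_coe, heq]
      have hr' : ∀ x : G, x ∈ D ↔ r * x * r⁻¹ ∈ D := hr
      exact (hr' w).1 (hHND w hwH hwN)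
    have hvv := hdom ⟨(G ⧸ N → K.carrier) ⋊[transAction (G ⧸ N) K.carrier] (G ⧸ N)⟩
      (wr_productVariety 𝒩 𝒬 (G ⧸ N) K.carrier hK hQmem)
      (kkHom N f σ hσmk) (kkHom N g σ hσmk) hagree
    have hleft := congrFun (congrArg SemidirectProduct.left hvv) (1 : G ⧸ N)
    simp only [kkHom_left] at hleft
    have hElt : kkElt N σ hσmk (1 : G ⧸ N) n = ⟨n, hn⟩ := by
      apply Subtype.ext
      rw [kkElt_coe, (QuotientGroup.eq_one_iff n).2 hn, mul_one, hσ1]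
      group
    rwa [hElt] at hleft
  -- final assembly
  ext a
  simp only [dominion, Set.mem_setOf_eq]
  constructor
  · intro ha
    obtain ⟨h, hh, hmk⟩ := step1 a ha
    have hmk' : (QuotientGroup.mk h : G ⧸ N) = QuotientGroup.mk a := hmk
    have hmN : h⁻¹ * a ∈ N := by
      rw [← QuotientGroup.eq_one_iff (N := N), QuotientGroup.mk_mul,
        QuotientGroup.mk_inv, hmk']
      group
    have hmdom : (h⁻¹ * a) ∈ dominion (ProductVariety 𝒩 𝒬) G H := by
      intro K hK f g hfg
      rw [map_mul, map_mul, map_inv, map_inv, hfg h hh, ha K hK f g hfg]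
    have hmD : h⁻¹ * a ∈ D := by
      rw [hD]
      exact ⟨⟨h⁻¹ * a, hmN⟩, step2 _ hmN hmdom, rfl⟩
    exact Set.mem_mul.2 ⟨h, hh, h⁻¹ * a, hmD, by group⟩
  · intro ha K hK f g hfg
    obtain ⟨h, hh, d, hd, rfl⟩ := Set.mem_mul.1 ha
    rw [map_mul, map_mul, hfg h hh]
    congr 1
    obtain ⟨M, hMnorm, hMN, hMQ⟩ := hK
    letI := hMnorm
    have key : ∀ φ : G →* K.carrier, N ≤ Subgroup.comap φ M := by
      intro φ
      rw [hN]
      refine verbal_le 𝒬 G _ (hMnorm.comap φ) ?_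
      letI := hMnorm.comap φ
      have hkψ : ((QuotientGroup.mk' M).comp φ).ker = Subgroup.comap φ M := by
        rw [← MonoidHom.comap_ker, QuotientGroup.ker_mk']
      have e : G ⧸ Subgroup.comap φ M ≃* ((QuotientGroup.mk' M).comp φ).range :=
        (QuotientGroup.quotientMulEquivOfEq hkψ.symm).trans
          (QuotientGroup.quotientKerEquivRange ((QuotientGroup.mk' M).comp φ))
      have h1 : 𝒬.Mem ⟨((QuotientGroup.mk' M).comp φ).range⟩ :=
        𝒬.subgroup_closed ⟨K.carrier ⧸ M⟩ _ hMQ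
      exact 𝒬.iso_closed e.symm h1
    have hfg' : ∀ x ∈ H.subgroupOf N,
        (f.domRestrict N).codRestrict M (fun x => key f x.2) x =
        (g.domRestrict N).codRestrict M (fun x => key g x.2) x := by
      intro x hx
      apply Subtype.ext
      exact hfg x (Subgroup.mem_subgroupOf.1 hx)
    rw [hD] at hd
    obtain ⟨d', hd', rfl⟩ := hd
    have hfin := hd' ⟨↥M⟩ hMN
      ((f.domRestrict N).codRestrict M (fun x => key f x.2))
      ((g.domRestrict N).codRestrict M (fun x => key g x.2)) hfg'
    exact congrArg Subtype.val hfin
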